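/- Let x ∈ ℝ be such that u(x) ≠ 0 and Re(conj(u(x))·u'(x)) ≥ 0. Then |u(y)| > |u(x)|/2 for all y ∈ [x, x + δ), where δ := −1/2 + √(1/4 + 1/(2·C₂)). -/

import Mathlib

open MeasureTheory Set intervalIntegral

private lemma reII {f : ℝ → ℂ} {a b : ℝ} (h : IntervalIntegrable f volume a b) :
    IntervalIntegrable (fun t => (f t).re) volume a b :=
  ⟨h.1.re, h.2.re⟩

private lemma fII (V : ℝ → ℝ) (hVmeas : Measurable V) (hVloc : LocallyIntegrable V volume)
    (E : ℂ) (u : ℝ → ℂ) (hucont : Continuous u) (a b : ℝ) :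
    IntervalIntegrable (fun t => ((V t : ℂ) - E) * u t) volume a b := by
  rw [intervalIntegrable_iff]
  have hK : IsCompact (uIcc a b) := isCompact_uIcc
  obtain ⟨C, hC⟩ : ∃ C, ∀ t ∈ uIcc a b, ‖u t‖ ≤ C :=
    hK.exists_bound_of_continuousOn hucont.continuousOn
  have hCnn : 0 ≤ C := le_trans (norm_nonneg _) (hC a left_mem_uIcc)
  have hVint : IntegrableOn V (uIcc a b) volume := hVloc.integrableOn_isCompact hK
  have hg : IntegrableOn (fun t => (|V t| + ‖E‖) * C) (uIcc a b) volume :=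
    (hVint.abs.add (integrableOn_const hK.measure_lt_top.ne)).mul_const C
  refine Integrable.mono' (g := fun t => (|V t| + ‖E‖) * C)
      (hg.mono_set (uIoc_subset_uIcc : uIoc a b ⊆ uIcc a b)) ?_ ?_
  · exact (((Complex.measurable_ofReal.comp hVmeas).sub measurable_const).mul
      hucont.measurable).aestronglyMeasurable
  · refine (ae_restrict_iff' measurableSet_uIoc).2 (ae_of_all _ fun t ht => ?_)
    have h1 : ‖((V t : ℂ) - E) * u t‖ ≤ (|V t| + ‖E‖) * C := by
      rw [norm_mul]
      refine mul_le_mul ?_ (hC t (uIoc_subset_uIcc ht)) (norm_nonneg _) (by positivity)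
      calc ‖((V t : ℂ) - E)‖ ≤ ‖(V t : ℂ)‖ + ‖E‖ := norm_sub_le _ _
        _ = |V t| + ‖E‖ := by simp
    exact h1

private lemma VmII (V : ℝ → ℝ) (hVmeas : Measurable V) (hVloc : LocallyIntegrable V volume)
    (a b : ℝ) : IntervalIntegrable (fun y => max (-V y) 0) volume a b := by
  have h : LocallyIntegrable (fun y => max (-V y) 0) volume := by
    refine hVloc.mono ((hVmeas.neg.max measurable_const).aestronglyMeasurable) ?_
    refine ae_of_all _ fun y => ?_
    rw [Real.norm_eq_abs, Real.norm_eq_abs, abs_of_nonneg (le_max_right _ _)]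
    rcases le_total (V y) 0 with h | h
    · rw [max_eq_left (by linarith)]; rw [abs_of_nonpos h]
    · rw [max_eq_right (by linarith)]; exact abs_nonneg _
  rw [intervalIntegrable_iff]
  exact (h.integrableOn_isCompact isCompact_uIcc).mono_set uIoc_subset_uIcc

private lemma chunk (V : ℝ → ℝ) (hVmeas : Measurable V) (hVloc : LocallyIntegrable V volume)
    (C₁ : ℝ) (hC₁ : IsLUB (Set.range fun x : ℝ => ∫ y in x..x + 1, max (-V y) 0) C₁)
    (a m : ℝ) (hm : 0 ≤ m) : ∫ y in a..a + m, max (-V y) 0 ≤ C₁ * (m + 1) := by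
  set Vm : ℝ → ℝ := fun y => max (-V y) 0 with hVm
  have hII : ∀ p q : ℝ, IntervalIntegrable Vm volume p q := VmII V hVmeas hVloc
  have hVmnn : ∀ y, 0 ≤ Vm y := fun y => le_max_right _ _
  have hub : ∀ p : ℝ, ∫ y in p..p + 1, Vm y ≤ C₁ := fun p => hC₁.1 ⟨p, rfl⟩
  have hC₁nn : 0 ≤ C₁ :=
    le_trans (intervalIntegral.integral_nonneg (by norm_num) fun y _ => hVmnn y) (hub 0)
  have hstep : ∀ n : ℕ, ∫ y in a..a + n, Vm y ≤ n * C₁ := by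
    intro n
    induction n with
    | zero => simp
    | succ n ih =>
      have hsplit : ∫ y in a..a + (n + 1 : ℕ), Vm y
          = (∫ y in a..a + n, Vm y) + ∫ y in (a + n)..(a + n) + 1, Vm y := by
        rw [intervalIntegral.integral_add_adjacent_intervals (hII _ _) (hII _ _)]
        push_cast; ring_nf
      rw [hsplit]; push_cast
      have := hub (a + n)
      linarith
  have hn := hstep ⌈m⌉₊
  have hmono : ∫ y in a..a + m, Vm y ≤ ∫ y in a..a + (⌈m⌉₊ : ℝ), Vm y := by
    refine intervalIntegral.integral_mono_interval le_rfl (by linarith) ?_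
      (ae_of_all _ fun y => hVmnn y) (hII _ _)
    have : m ≤ (⌈m⌉₊ : ℝ) := Nat.le_ceil m
    linarith
  have hceil : (⌈m⌉₊ : ℝ) ≤ m + 1 := (Nat.ceil_lt_add_one hm).le
  calc ∫ y in a..a + m, Vm y ≤ (⌈m⌉₊ : ℝ) * C₁ := le_trans hmono hn
    _ ≤ (m + 1) * C₁ := by nlinarith
    _ = C₁ * (m + 1) := by ring

private lemma u'cont (V : ℝ → ℝ) (hVmeas : Measurable V) (hVloc : LocallyIntegrable V volume)
    (E : ℂ) (u u' : ℝ → ℂ) (hu : ∀ x : ℝ, HasDerivAt u (u' x) x)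
    (heq : ∀ a b : ℝ, a ≤ b → u' b - u' a = ∫ t in a..b, ((V t : ℂ) - E) * u t) :
    Continuous u' := by
  have hucont : Continuous u := by
    rw [continuous_iff_continuousAt]; exact fun t => (hu t).continuousAt
  have hrep : ∀ b, u' b = u' 0 + ∫ t in (0:ℝ)..b, ((V t : ℂ) - E) * u t := by
    intro b
    rcases le_total 0 b with h | h
    · have := heq 0 b h; rw [← this]; ring
    · have := heq b 0 h
      rw [intervalIntegral.integral_symm] at this
      have h2 : u' b = u' 0 + ∫ t in (0:ℝ)..b, ((V t : ℂ) - E) * u t := by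
        have := this; linear_combination -this
      exact h2
  have : u' = fun b => u' 0 + ∫ t in (0:ℝ)..b, ((V t : ℂ) - E) * u t := funext hrep
  rw [this]
  exact continuous_const.add
    (intervalIntegral.continuous_primitive (fun a b => fII V hVmeas hVloc E u hucont a b) 0)

set_option maxHeartbeats 1000000 in
/-- Theorem 1.1(ii): if `u(x) ≠ 0` and `Re(conj(u(x)) u'(x)) ≥ 0`, then
`|u(y)| > |u(x)|/2` for `y ∈ [x, x + δ)`, where `δ = -1/2 + √(1/4 + 1/(2C₂))`. -/
theorem stmt_3
    (V : ℝ → ℝ) (hVmeas : Measurable V)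
    (hVloc : LocallyIntegrable V volume)
    (C₁ : ℝ)
    (hC₁ : IsLUB (Set.range fun x : ℝ => ∫ y in x..x + 1, max (-V y) 0) C₁)
    (E : ℂ) (u u' : ℝ → ℂ)
    (hu : ∀ x : ℝ, HasDerivAt u (u' x) x)
    (heq : ∀ a b : ℝ, a ≤ b →
      u' b - u' a = ∫ t in a..b, ((V t : ℂ) - E) * u t)
    (C₂ : ℝ) (hC₂ : C₂ = C₁ + ‖E‖) (hC₂pos : 0 < C₂)
    (δ : ℝ) (hδ : δ = -(1 / 2) + Real.sqrt (1 / 4 + 1 / (2 * C₂)))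
    (x : ℝ) (hx : u x ≠ 0) (hsign : 0 ≤ (starRingEnd ℂ (u x) * u' x).re) :
    ∀ y ∈ Ico x (x + δ), ‖u x‖ / 2 < ‖u y‖ := by
  intro y hy
  obtain ⟨hxy, hyd⟩ := hy
  have hucont : Continuous u := by
    rw [continuous_iff_continuousAt]; exact fun t => (hu t).continuousAt
  have hu'c : Continuous u' := u'cont V hVmeas hVloc E u u' hu heq
  have hEnn : 0 ≤ ‖E‖ := norm_nonneg E
  set r := ‖u x‖ with hr
  have hrpos : 0 < r := norm_pos_iff.mpr hx
  -- max of |u| on [x,y]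
  have hφc : ContinuousOn (fun t => ‖u t‖) (Icc x y) :=
    (continuous_norm.comp hucont).continuousOn
  obtain ⟨t', ht'mem, ht'max⟩ :=
    isCompact_Icc.exists_isMaxOn (nonempty_Icc.2 hxy) hφc
  set M := ‖u t'‖ with hM
  have hMr : r ≤ M := ht'max (left_mem_Icc.2 hxy)
  have hMpos : 0 < M := lt_of_lt_of_le hrpos hMr
  rcases eq_or_lt_of_le (ht'mem.2 : t' ≤ y) with ht'y | ht'y
  · rw [← ht'y]; linarith
  -- main case : t' < y
  set w := starRingEnd ℂ (u t') with hw
  set G : ℝ → ℝ := fun t => (w * u t).re with hGdef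
  set g' : ℝ → ℝ := fun t => (w * u' t).re with hg'def
  have hGderiv : ∀ t : ℝ, HasDerivAt G (g' t) t := by
    intro t
    exact Complex.reCLM.hasFDerivAt.comp_hasDerivAt t ((hu t).const_mul w)
  have hGC : Continuous G := Complex.continuous_re.comp (continuous_const.mul hucont)
  have hg'C : Continuous g' := Complex.continuous_re.comp (continuous_const.mul hu'c)
  have hGt' : G t' = M ^ 2 := by
    simp only [hGdef, hw, mul_comm, Complex.mul_conj, Complex.ofReal_re]
    rw [hM, Complex.sq_norm]
  have hGle : ∀ s ∈ Icc x y, G s ≤ M ^ 2 := by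
    intro s hs
    have h1 : G s ≤ ‖w * u s‖ := Complex.re_le_norm _
    rw [norm_mul, hw, Complex.norm_conj] at h1
    have h2 : ‖u s‖ ≤ M := ht'max hs
    calc G s ≤ ‖u t'‖ * ‖u s‖ := h1
      _ ≤ M * M := by rw [← hM]; nlinarith [norm_nonneg (u s)]
      _ = M ^ 2 := by ring
  have hg'sign : 0 ≤ g' t' := by
    rcases eq_or_lt_of_le (ht'mem.1 : x ≤ t') with hxt' | hxt'
    · rw [hg'def, hw, ← hxt']; exact hsign
    · -- interior maximum of normSq ∘ u
      have hre : HasDerivAt (fun t => (u t).re) ((u' t').re) t' :=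
        Complex.reCLM.hasFDerivAt.comp_hasDerivAt t' (hu t')
      have him : HasDerivAt (fun t => (u t).im) ((u' t').im) t' :=
        Complex.imCLM.hasFDerivAt.comp_hasDerivAt t' (hu t')
      have hψ : HasDerivAt (fun t => (u t).re * (u t).re + (u t).im * (u t).im)
          ((u' t').re * (u t').re + (u t').re * (u' t').re
            + ((u' t').im * (u t').im + (u t').im * (u' t').im)) t' :=
        (hre.mul hre).add (him.mul him)
      have hmax : IsLocalMax (fun t => (u t).re * (u t).re + (u t).im * (u t).im) t' := by
        have hIcc : Icc x y ∈ nhds t' := Icc_mem_nhds hxt' ht'y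
        refine Filter.eventually_of_mem hIcc fun s hs => ?_
        have h2 : ‖u s‖ ≤ ‖u t'‖ := ht'max hs
        have := Complex.sq_norm (u s); have := Complex.sq_norm (u t')
        simp only [Complex.normSq_apply] at this ⊢
        nlinarith [norm_nonneg (u s), norm_nonneg (u t'), Complex.sq_norm (u s),
          Complex.sq_norm (u t'), Complex.normSq_apply (u s), Complex.normSq_apply (u t')]
      have hz := hmax.hasDerivAt_eq_zero hψ
      have : g' t' = (u t').re * (u' t').re + (u t').im * (u' t').im := by
        simp [hg'def, hw, Complex.mul_re]
      rw [this]; linarith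
  -- the key claim
  have key : ∀ t ∈ Icc t' y, M ^ 2 / 2 < G t := by
    by_contra hcon
    push_neg at hcon
    obtain ⟨t₀, ht₀, hGt₀⟩ := hcon
    set Sb : Set ℝ := {t | t ∈ Icc t' y ∧ G t ≤ M ^ 2 / 2} with hSb
    have hSbne : Sb.Nonempty := ⟨t₀, ht₀, hGt₀⟩
    have hSbclosed : IsClosed Sb := by
      have h : Sb = Icc t' y ∩ G ⁻¹' (Iic (M ^ 2 / 2)) := rfl
      rw [h]; exact isClosed_Icc.inter (isClosed_Iic.preimage hGC)
    have hSbbdd : BddBelow Sb := ⟨t', fun s hs => hs.1.1⟩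
    set τ := sInf Sb with hτ
    have hτmem : τ ∈ Sb := hSbclosed.csInf_mem hSbne hSbbdd
    have hτIcc : τ ∈ Icc t' y := hτmem.1
    have hGτ : G τ ≤ M ^ 2 / 2 := hτmem.2
    have ht'τ : t' < τ := by
      rcases eq_or_lt_of_le hτIcc.1 with h | h
      · exfalso; rw [← h, hGt'] at hGτ; nlinarith
      · exact h
    have hGlow : ∀ s ∈ Ico t' τ, M ^ 2 / 2 < G s := by
      intro s hs
      by_contra hns
      push_neg at hns
      have hmem : s ∈ Sb := ⟨⟨hs.1, hs.2.le.trans hτIcc.2⟩, hns⟩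
      exact absurd (csInf_le hSbbdd hmem) (not_le.2 hs.2)
    have hGτge : M ^ 2 / 2 ≤ G τ := by
      have hcl : τ ∈ closure (Ico t' τ) := by
        rw [closure_Ico ht'τ.ne]; exact right_mem_Icc.2 ht'τ.le
      have hnb : (nhdsWithin τ (Ico t' τ)).NeBot := mem_closure_iff_nhdsWithin_neBot.1 hcl
      exact ge_of_tendsto (hGC.continuousAt.tendsto.mono_left nhdsWithin_le_nhds)
        (eventually_nhdsWithin_of_forall fun s hs => (hGlow s hs).le)
    have hG0 : ∀ s ∈ Icc t' τ, 0 ≤ G s := by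
      intro s hs
      rcases eq_or_lt_of_le hs.2 with h | h
      · rw [h]; nlinarith
      · nlinarith [hGlow s ⟨hs.1, h⟩]
    have hsubxy : Icc t' τ ⊆ Icc x y := Icc_subset_Icc ht'mem.1 hτIcc.2
    have hg'low : ∀ t ∈ Icc t' τ,
        -(M ^ 2) * (C₁ * ((t - t') + 1) + ‖E‖ * (t - t')) ≤ g' t := by
      intro t ht
      have htt' : t' ≤ t := ht.1
      have hfI : IntervalIntegrable (fun s => ((V s : ℂ) - E) * u s) volume t' t :=
        fII V hVmeas hVloc E u hucont t' t
      have h1 : u' t - u' t' = ∫ s in t'..t, ((V s : ℂ) - E) * u s := heq t' t htt'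
      have h2 : g' t - g' t' = ∫ s in t'..t, (w * (((V s : ℂ) - E) * u s)).re := by
        have h3 : g' t - g' t' = (w * (u' t - u' t')).re := by
          simp [hg'def, mul_sub, Complex.sub_re]
        rw [h3, h1, ← intervalIntegral.integral_const_mul]
        exact (Complex.reCLM.intervalIntegral_comp_comm (hfI.const_mul w)).symm
      have hpt : ∀ s ∈ Icc t' t,
          -(max (-V s) 0) * M ^ 2 - ‖E‖ * M ^ 2
            ≤ (w * (((V s : ℂ) - E) * u s)).re := by
        intro s hs
        have hsτ : s ∈ Icc t' τ := ⟨hs.1, hs.2.trans ht.2⟩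
        have hG0s := hG0 s hsτ
        have hGles := hGle s (hsubxy hsτ)
        have hexp : (w * (((V s : ℂ) - E) * u s)).re
            = V s * G s - (E * (w * u s)).re := by
          have h : w * (((V s : ℂ) - E) * u s) = (V s : ℂ) * (w * u s) - E * (w * u s) := by
            ring
          rw [h]
          simp [Complex.sub_re, Complex.mul_re, Complex.ofReal_re, Complex.ofReal_im, hGdef]
        rw [hexp]
        have hb1 : -(max (-V s) 0) * M ^ 2 ≤ V s * G s := by
          have h1 : -V s ≤ max (-V s) 0 := le_max_left _ _
          have h2 : 0 ≤ max (-V s) 0 := le_max_right _ _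
          nlinarith
        have hb2 : (E * (w * u s)).re ≤ ‖E‖ * M ^ 2 := by
          have h1 : (E * (w * u s)).re ≤ ‖E * (w * u s)‖ := Complex.re_le_norm _
          rw [norm_mul, norm_mul, hw, Complex.norm_conj, ← hM] at h1
          have h2 : ‖u s‖ ≤ M := ht'max (hsubxy hsτ)
          have h3 : ‖E‖ * (M * ‖u s‖) ≤ ‖E‖ * (M * M) :=
            mul_le_mul_of_nonneg_left (mul_le_mul_of_nonneg_left h2 hMpos.le) hEnn
          nlinarith [h1, h3]
        linarith
      have hlhsII : IntervalIntegrable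
          (fun s => -(max (-V s) 0) * M ^ 2 - ‖E‖ * M ^ 2) volume t' t :=
        ((VmII V hVmeas hVloc t' t).neg.mul_const _).sub intervalIntegrable_const
      have hint : ∫ s in t'..t, (-(max (-V s) 0) * M ^ 2 - ‖E‖ * M ^ 2)
          ≤ ∫ s in t'..t, (w * (((V s : ℂ) - E) * u s)).re :=
        intervalIntegral.integral_mono_on htt' hlhsII (reII (hfI.const_mul w)) hpt
      have hVmint : ∫ s in t'..t, max (-V s) 0 ≤ C₁ * ((t - t') + 1) := by
        have h := chunk V hVmeas hVloc C₁ hC₁ t' (t - t') (by linarith)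
        rwa [show t' + (t - t') = t by ring] at h
      have hcomp : ∫ s in t'..t, (-(max (-V s) 0) * M ^ 2 - ‖E‖ * M ^ 2)
          = -(M ^ 2) * (∫ s in t'..t, max (-V s) 0) - ‖E‖ * M ^ 2 * (t - t') := by
        have hfun : (fun s => -(max (-V s) 0) * M ^ 2 - ‖E‖ * M ^ 2)
            = fun s => (-(M ^ 2)) * (max (-V s) 0) + (-(‖E‖ * M ^ 2)) := by
          funext s; ring
        rw [hfun, intervalIntegral.integral_add
          ((VmII V hVmeas hVloc t' t).const_mul _) intervalIntegrable_const,
          intervalIntegral.integral_const_mul, intervalIntegral.integral_const]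
        simp only [smul_eq_mul]; ring
      have hfinal : -(M ^ 2) * (C₁ * ((t - t') + 1) + ‖E‖ * (t - t'))
          ≤ ∫ s in t'..t, (w * (((V s : ℂ) - E) * u s)).re := by
        rw [hcomp] at hint
        nlinarith [sq_nonneg M]
      linarith [h2, hfinal, hg'sign]
    -- integrate the derivative bound
    set L := τ - t' with hLdef
    have hL0 : 0 ≤ L := by simp [hLdef]; linarith
    have hLδ : L < δ := by
      have h1 : τ ≤ y := hτIcc.2
      have h2 : x ≤ t' := ht'mem.1
      simp only [hLdef]; linarith
    have hFTC : G τ - G t' = ∫ t in t'..τ, g' t :=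
      (intervalIntegral.integral_eq_sub_of_hasDerivAt (fun t _ => hGderiv t)
        (hg'C.intervalIntegrable t' τ)).symm
    have hmono2 : ∫ t in t'..τ, (-(M ^ 2) * (C₁ * ((t - t') + 1) + ‖E‖ * (t - t')))
        ≤ ∫ t in t'..τ, g' t := by
      refine intervalIntegral.integral_mono_on ht'τ.le ?_
        (hg'C.intervalIntegrable _ _) hg'low
      exact (Continuous.intervalIntegrable (by fun_prop) _ _)
    have hid : ∫ t in t'..τ, (t - t') = L ^ 2 / 2 := by
      have h := intervalIntegral.integral_comp_sub_right (a := t') (b := τ) (fun s : ℝ => s) t'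
      simp only [integral_id, sub_self] at h
      rw [h]; simp [hLdef]
    have hcomp2 : ∫ t in t'..τ, (-(M ^ 2) * (C₁ * ((t - t') + 1) + ‖E‖ * (t - t')))
        = -(M ^ 2) * (C₁ * (L ^ 2 / 2 + L) + ‖E‖ * (L ^ 2 / 2)) := by
      have hfun : (fun t : ℝ => -(M ^ 2) * (C₁ * ((t - t') + 1) + ‖E‖ * (t - t')))
          = fun t => (-(M ^ 2) * (C₁ + ‖E‖)) * (t - t') + (-(M ^ 2) * C₁) := by
        funext t; ring
      rw [hfun, intervalIntegral.integral_add
        ((Continuous.intervalIntegrable (by fun_prop) _ _))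
        intervalIntegrable_const, intervalIntegral.integral_const_mul, hid,
        intervalIntegral.integral_const]
      simp only [smul_eq_mul, hLdef]; ring
    have hGτlow : M ^ 2 * (1 - (C₁ * L + C₂ * L ^ 2 / 2)) ≤ G τ := by
      rw [hcomp2] at hmono2
      rw [hGt'] at hFTC
      rw [hC₂]; nlinarith [sq_nonneg M]
    have h4 : (0:ℝ) < 1/4 + 1/(2*C₂) := by positivity
    have hs : Real.sqrt (1/4 + 1/(2*C₂)) ^ 2 = 1/4 + 1/(2*C₂) := Real.sq_sqrt h4.le
    have hδ2 : δ ^ 2 + δ = 1 / (2 * C₂) := by rw [hδ]; linear_combination hs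
    have hC1le : C₁ ≤ C₂ := by rw [hC₂]; linarith
    have hC1nn : 0 ≤ C₁ := by
      refine le_trans ?_ (hC₁.1 ⟨0, rfl⟩)
      exact intervalIntegral.integral_nonneg (by norm_num) fun s _ => le_max_right _ _
    clear_value L τ M
    have hhalf : C₁ * L + C₂ * L ^ 2 / 2 < 1/2 := by
      have h5 : C₂ * (δ ^ 2 + δ) = 1/2 := by
        rw [hδ2]; field_simp
      have e1 : C₁ * L ≤ C₂ * L := mul_le_mul_of_nonneg_right hC1le hL0
      have e2 : C₂ * L < C₂ * δ := mul_lt_mul_of_pos_left hLδ hC₂pos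
      have e3 : C₂ * L ^ 2 ≤ C₂ * δ ^ 2 := by
        refine mul_le_mul_of_nonneg_left ?_ hC₂pos.le
        nlinarith
      have e4 : 0 ≤ C₂ * δ ^ 2 := by positivity
      have e5 : C₂ * (δ ^ 2 + δ) = C₂ * δ ^ 2 + C₂ * δ := by ring
      linarith only [e1, e2, e3, e4, e5, h5]
    nlinarith [mul_pos hMpos hMpos]
  have hy2 := key y (right_mem_Icc.2 ht'y.le)
  have h1 : G y ≤ M * ‖u y‖ := by
    have h1 : G y ≤ ‖w * u y‖ := Complex.re_le_norm _
    rwa [norm_mul, hw, Complex.norm_conj, ← hM] at h1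
  nlinarith [norm_nonneg (u y)]
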